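/- Let (A, μ, α) be a multiplicative Hom-algebra over a field k of characteristic 0 that is either a right Hom-alternative algebra or a non-commutative Hom-Jordan algebra. Then A is up to fourth Hom-power associative. -/

import Mathlib

variable {k A : Type*} [Field k] [CharZero k] [AddCommGroup A] [Module k A]

/-- The `n`-th Hom-power: `x^1 = x`, `x^n = x^{n-1} · α^{n-2}(x)`. -/
def homPow (μ : A →ₗ[k] A →ₗ[k] A) (α : A →ₗ[k] A) (x : A) : ℕ → A
  | 0 => x
  | 1 => x
  | n + 2 => μ (homPow μ α x (n + 1)) ((α ^ n) x)

/-- `A` is `n`-th Hom-power associative. -/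
def IsNthHomPowerAssoc (μ : A →ₗ[k] A →ₗ[k] A) (α : A →ₗ[k] A) (n : ℕ) : Prop :=
  ∀ (x : A) (i : ℕ), 1 ≤ i → i ≤ n - 1 →
    homPow μ α x n =
      μ ((α ^ (n - i - 1)) (homPow μ α x i)) ((α ^ (i - 1)) (homPow μ α x (n - i)))

/-- `A` is Hom-power associative. -/
def IsHomPowerAssoc (μ : A →ₗ[k] A →ₗ[k] A) (α : A →ₗ[k] A) : Prop :=
  ∀ n : ℕ, 2 ≤ n → IsNthHomPowerAssoc μ α n

/-- `A` is up to `n`-th Hom-power associative. -/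
def IsUpToNthHomPowerAssoc (μ : A →ₗ[k] A →ₗ[k] A) (α : A →ₗ[k] A) (n : ℕ) : Prop :=
  ∀ m : ℕ, 2 ≤ m → m ≤ n → IsNthHomPowerAssoc μ α m

/-- The Hom-algebra `(A, μ, α)` is multiplicative. -/
def IsMultiplicative (μ : A →ₗ[k] A →ₗ[k] A) (α : A →ₗ[k] A) : Prop :=
  ∀ x y : A, α (μ x y) = μ (α x) (α y)


/-- The Hom-associator `as(x,y,z) = (xy)α(z) − α(x)(yz)`. -/
def homAssoc (μ : A →ₗ[k] A →ₗ[k] A) (α : A →ₗ[k] A) (x y z : A) : A :=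
  μ (μ x y) (α z) - μ (α x) (μ y z)

/-- `A` is right Hom-alternative: `as(y,x,x) = 0`. -/
def IsRightHomAlternative (μ : A →ₗ[k] A →ₗ[k] A) (α : A →ₗ[k] A) : Prop :=
  ∀ x y : A, homAssoc μ α y x x = 0

/-- `A` is a non-commutative Hom-Jordan algebra: it is Hom-flexible and satisfies
`as(x²,α(y),α(x)) = 0`. -/
def IsNoncommHomJordan (μ : A →ₗ[k] A →ₗ[k] A) (α : A →ₗ[k] A) : Prop :=
  (∀ x y : A, homAssoc μ α x y x = 0) ∧
  (∀ x y : A, homAssoc μ α (μ x x) (α y) (α x) = 0)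

/-- Cancellation by 2 in a module over a characteristic-zero field. -/
lemma cancel_two {A : Type*} [AddCommGroup A] (k : Type*) [Field k] [CharZero k]
    [Module k A] {v w : A} (h : v + v = w + w) : v = w := by
  have h2 : (2 : k) • v = (2 : k) • w := by rw [two_smul, two_smul]; exact h
  exact smul_right_injective A two_ne_zero h2

/-- Proposition: a multiplicative right Hom-alternative algebra or non-commutative
Hom-Jordan algebra is up to fourth Hom-power associative. -/
theorem stmt13 (μ : A →ₗ[k] A →ₗ[k] A) (α : A →ₗ[k] A)
    (hmul : IsMultiplicative μ α)
    (h : IsRightHomAlternative μ α ∨ IsNoncommHomJordan μ α) :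
    IsUpToNthHomPowerAssoc μ α 4 := by
  have key : ∀ x : A,
      μ (μ x x) (α x) = μ (α x) (μ x x) ∧
      μ (μ (μ x x) (α x)) (α (α x)) = μ (α (μ x x)) (α (μ x x)) ∧
      μ (μ (μ x x) (α x)) (α (α x)) = μ (α (α x)) (μ (μ x x) (α x)) := by
    intro x
    rcases h with hra | ⟨hflex, hjor⟩
    · -- right Hom-alternative case
      have e1 : μ (μ x x) (α x) = μ (α x) (μ x x) := by
        have := hra x x; rw [homAssoc, sub_eq_zero] at this; exact this
      have e2' := hra (α x) (μ x x)
      rw [homAssoc, sub_eq_zero] at e2'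
      have e2 : μ (μ (μ x x) (α x)) (α (α x)) = μ (α (μ x x)) (α (μ x x)) := by
        rw [e2', hmul]
      refine ⟨e1, e2, ?_⟩
      -- linearization of right alternativity
      have hlin : ∀ y a b : A,
          (μ (μ y a) (α b) - μ (α y) (μ a b)) +
          (μ (μ y b) (α a) - μ (α y) (μ b a)) = 0 := by
        intro y a b
        have h0 := hra (a + b) y
        have ha := hra a y
        have hb := hra b y
        rw [homAssoc] at h0 ha hb
        simp only [map_add, LinearMap.add_apply] at h0
        linear_combination (norm := abel) h0 - ha - hb
      have t := hlin (α x) (μ x x) (α x)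
      rw [← e1, ← hmul x x, ← e2] at t
      have t2 : μ (μ (μ x x) (α x)) (α (α x)) + μ (μ (μ x x) (α x)) (α (α x)) =
          μ (α (α x)) (μ (μ x x) (α x)) + μ (α (α x)) (μ (μ x x) (α x)) := by
        linear_combination (norm := abel) t
      exact cancel_two k t2
    · -- non-commutative Hom-Jordan case
      have e1 : μ (μ x x) (α x) = μ (α x) (μ x x) := by
        have := hflex x x; rw [homAssoc, sub_eq_zero] at this; exact this
      have e2' := hjor x x
      rw [homAssoc, sub_eq_zero] at e2'
      have e2 : μ (μ (μ x x) (α x)) (α (α x)) = μ (α (μ x x)) (α (μ x x)) := by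
        rw [e2', hmul]
      refine ⟨e1, e2, ?_⟩
      -- linearization of flexibility: as(a,y,b) + as(b,y,a) = 0
      have hlin : ∀ a y b : A,
          (μ (μ a y) (α b) - μ (α a) (μ y b)) +
          (μ (μ b y) (α a) - μ (α b) (μ y a)) = 0 := by
        intro a y b
        have h0 := hflex (a + b) y
        have ha := hflex a y
        have hb := hflex b y
        rw [homAssoc] at h0 ha hb
        simp only [map_add, LinearMap.add_apply] at h0
        linear_combination (norm := abel) h0 - ha - hb
      have t := hlin (α x) (α x) (μ x x)
      rw [← e1, ← hmul x x] at t
      linear_combination (norm := abel) t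
  intro m hm2 hm4 x i hi1 hi2
  obtain ⟨e1, e2, e3⟩ := key x
  interval_cases m <;> interval_cases i <;>
    simp only [homPow, pow_zero, pow_one, pow_succ, Module.End.one_apply,
      Module.End.mul_apply] <;>
    first
      | rfl
      | exact e1
      | exact e2
      | exact e3
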